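/- Let α₁ ≥ α₂ ≥ 0 and γ ≥ 0 be real numbers. Then ½(|α₁ − γ| − |α₁ − α₂ − γ| − |α₂ − γ|) − ½(|α₁ + γ| − |α₁ − α₂ + γ| − |α₂ + γ|) = max(0, min(α₁ − γ, α₂) − max(α₂ − γ, 0)). -/
import Mathlib

set_option maxHeartbeats 4000000


/-- the explicit absolute-value formula (eq. (13) of the paper) for the
modified orbital integral `K̄(α;γ)` for `n = 3`, expressed as an identity of real numbers. -/
theorem stmt_14 (α₁ α₂ γ : ℝ) (h1 : α₂ ≤ α₁) (h2 : 0 ≤ α₂) (hγ : 0 ≤ γ) :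
    (1 / 2) * (|α₁ - γ| - |α₁ - α₂ - γ| - |α₂ - γ|)
      - (1 / 2) * (|α₁ + γ| - |α₁ - α₂ + γ| - |α₂ + γ|)
    = max 0 (min (α₁ - γ) α₂ - max (α₂ - γ) 0) := by
  rw [abs_of_nonneg (by linarith : (0:ℝ) ≤ α₁ + γ),
      abs_of_nonneg (by linarith : (0:ℝ) ≤ α₁ - α₂ + γ),
      abs_of_nonneg (by linarith : (0:ℝ) ≤ α₂ + γ)]
  rcases abs_cases (α₁ - γ) with ⟨e1, f1⟩ | ⟨e1, f1⟩ <;>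
  rcases abs_cases (α₁ - α₂ - γ) with ⟨e2, f2⟩ | ⟨e2, f2⟩ <;>
  rcases abs_cases (α₂ - γ) with ⟨e3, f3⟩ | ⟨e3, f3⟩ <;>
  rcases min_cases (α₁ - γ) α₂ with ⟨e4, f4⟩ | ⟨e4, f4⟩ <;>
  rcases max_cases (α₂ - γ) (0:ℝ) with ⟨e5, f5⟩ | ⟨e5, f5⟩ <;>
  rcases max_cases (0:ℝ) (min (α₁ - γ) α₂ - max (α₂ - γ) 0) with ⟨e6, f6⟩ | ⟨e6, f6⟩ <;>
  rw [e6] <;> rw [e4, e5] at * <;> linarith
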